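/- Under the hypotheses that each calibration example's non-conformity score is an exchangeable real-valued random variable together with the test score, that all scores are almost surely distinct, and that the subgraph collections come from approximate deducibility graphs with r < ∞ always, the event that the selected filtered output Y^{q̂}_{n+1} is coherently factual holds with probability between 1 − α and 1 − α + 1/(n+1). -/
import Mathlib


open MeasureTheory

section Aux

private lemma sorted_ms_aux (l : List ℝ) : List.Pairwise (· ≤ ·) (l.mergeSort (· ≤ ·)) := by
  have := List.pairwise_mergeSort (le := fun a b : ℝ => decide (a ≤ b)) ?_ ?_ l
  · simpa [List.Pairwise] using this
  · intro a b c; simp; exact le_trans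
  · intro a b; simp; exact le_total a b

private lemma rank_card_aux {m : ℕ} (f : Fin m → ℝ) (hf : Function.Injective f) (k : ℕ)
    (hk : k ≤ m) :
    (Finset.univ.filter
      (fun i : Fin m => (Finset.univ.filter (fun j => f i ≤ f j)).card ≤ k)).card = k := by
  classical
  set R : Fin m → ℕ := fun i => (Finset.univ.filter (fun j => f i ≤ f j)).card with hR
  have hmono : ∀ i i', f i < f i' → R i' < R i := by
    intro i i' h
    apply Finset.card_lt_card
    constructor
    · intro j hj
      simp only [hR, Finset.mem_filter, Finset.mem_univ, true_and] at *
      exact le_trans h.le hj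
    · intro hsub
      have : i ∈ Finset.univ.filter (fun j => f i ≤ f j) := by simp
      have hi' := hsub this
      simp only [hR, Finset.mem_filter, Finset.mem_univ, true_and] at hi'
      exact absurd hi' (not_le.mpr h)
  have hinj : Function.Injective R := by
    intro i i' h
    by_contra hne
    rcases lt_or_gt_of_ne (fun he => hne (hf he)) with hlt | hlt
    · exact absurd h (hmono i i' hlt).ne'
    · exact absurd h (hmono i' i hlt).ne
  have h1 : ∀ i, 1 ≤ R i := by
    intro i
    have : i ∈ Finset.univ.filter (fun j => f i ≤ f j) := by simp
    exact Finset.card_pos.mpr ⟨i, this⟩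
  have hm : ∀ i, R i ≤ m := fun i => by
    simpa using Finset.card_filter_le Finset.univ (fun j => f i ≤ f j)
  have himg : Finset.univ.image R = Finset.Icc 1 m := by
    apply Finset.eq_of_subset_of_card_le
    · intro v hv
      simp only [Finset.mem_image] at hv
      obtain ⟨i, _, rfl⟩ := hv
      simp [Finset.mem_Icc, h1 i, hm i]
    · rw [Finset.card_image_of_injective _ hinj]
      simp [Nat.card_Icc]
  calc (Finset.univ.filter (fun i : Fin m => R i ≤ k)).card
      = ((Finset.univ.filter (fun i : Fin m => R i ≤ k)).image R).card :=
        (Finset.card_image_of_injective _ hinj).symm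
    _ = ((Finset.univ.image R).filter (fun v => v ≤ k)).card := by
        congr 1
        rw [Finset.filter_image]
    _ = ((Finset.Icc 1 m).filter (fun v => v ≤ k)).card := by rw [himg]
    _ = k := by
        have : (Finset.Icc 1 m).filter (fun v => v ≤ k) = Finset.Icc 1 k := by
          ext v; simp only [Finset.mem_filter, Finset.mem_Icc]; omega
        rw [this]; simp [Nat.card_Icc]

private lemma filter_ofFn_len_aux {m : ℕ} (g : Fin m → ℝ) (p : ℝ → Bool) :
    ((List.ofFn g).filter p).length = ∑ i : Fin m, if p (g i) then 1 else 0 := by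
  induction m with
  | zero => simp
  | succ m ih =>
      rw [List.ofFn_succ, List.filter_cons, Fin.sum_univ_succ]
      by_cases h : p (g 0)
      · simp only [h, if_true, List.length_cons, ih (fun i => g i.succ)]; omega
      · simp only [h, if_false, Bool.false_eq_true, ih (fun i => g i.succ)]; omega

end Aux

/-- The `k`-th smallest element (1-indexed) of a list of reals. -/
noncomputable def kthSmallest (l : List ℝ) (k : ℕ) : ℝ :=
  (l.mergeSort (· ≤ ·)).getD (k - 1) 0

private lemma kth_le_iff_aux (l : List ℝ) (k : ℕ) (hk1 : 1 ≤ k) (hk2 : k ≤ l.length) (x : ℝ) :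
    x ≤ kthSmallest l k ↔ (l.filter (fun y => y < x)).length < k := by
  set L := l.mergeSort (· ≤ ·) with hL
  have hlen : L.length = l.length := List.length_mergeSort l
  have hsort : List.Pairwise (· ≤ ·) L := sorted_ms_aux l
  have hidx : k - 1 < L.length := by omega
  have hget : kthSmallest l k = L[k-1] := List.getD_eq_getElem L 0 hidx
  have hfl : (l.filter (fun y => y < x)).length = (L.filter (fun y => y < x)).length :=
    ((List.mergeSort_perm l _).filter _).length_eq.symm
  rw [hget, hfl]
  constructor
  · intro hx
    have hdrop : (L.drop (k-1)).filter (fun y => y < x) = [] := by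
      rw [List.filter_eq_nil_iff]
      intro y hy
      obtain ⟨i, hi, rfl⟩ := List.mem_iff_getElem.mp hy
      rw [List.getElem_drop]
      simp only [decide_eq_true_eq, not_lt]
      refine le_trans hx ?_
      have hi2 : k - 1 + i < L.length := by simp at hi; omega
      have : L.get ⟨k-1, hidx⟩ ≤ L.get ⟨k-1+i, hi2⟩ :=
        hsort.rel_get_of_le (by simp)
      simpa using this
    have hsplit := List.take_append_drop (k-1) L
    calc (L.filter (fun y => y < x)).length
        = ((L.take (k-1) ++ L.drop (k-1)).filter (fun y => y < x)).length := by rw [hsplit]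
      _ = ((L.take (k-1)).filter (fun y => y < x)).length := by
          rw [List.filter_append, hdrop]; simp
      _ ≤ (L.take (k-1)).length := List.length_filter_le _ _
      _ < k := by simp [hlen]; omega
  · intro hcount
    by_contra hx
    push_neg at hx
    have htake : (L.take k).filter (fun y => y < x) = L.take k := by
      rw [List.filter_eq_self]
      intro y hy
      obtain ⟨i, hi, rfl⟩ := List.mem_iff_getElem.mp hy
      have hiL : i < L.length := by simp at hi; omega
      rw [List.getElem_take]
      simp only [decide_eq_true_eq]
      have : L.get ⟨i, hiL⟩ ≤ L.get ⟨k-1, hidx⟩ :=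
        hsort.rel_get_of_le (by simp at hi ⊢; omega)
      calc L[i] ≤ L[k-1] := by simpa using this
        _ < x := hx
    have hlow : k ≤ (L.filter (fun y => y < x)).length := by
      have hsplit := List.take_append_drop k L
      calc k = (L.take k).length := by simp [hlen]; omega
        _ = ((L.take k).filter (fun y => y < x)).length := by rw [htake]
        _ ≤ ((L.take k).filter (fun y => y < x)).length
            + ((L.drop k).filter (fun y => y < x)).length := Nat.le_add_right _ _
        _ = (L.filter (fun y => y < x)).length := by
            rw [← List.length_append, ← List.filter_append, hsplit]
    omega

/-- Calibrated Factuality (Theorem 1, abstract form): with exchangeable, a.s.-distinct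
non-conformity scores `r_1, ..., r_{n+1}`, `q̂` the `⌈(1−α)(n+1)⌉`-th smallest of
`{1 − r_i}_{i=1}^n`, and the filtered-output event `E` deterministically equivalent to
`r_{n+1} ≥ 1 − q̂`, the selected filtered output is coherently factual with probability
between `1 − α` and `1 − α + 1/(n+1)`. -/
theorem stmt_9 {Ω : Type*} [MeasurableSpace Ω] (μ : Measure Ω) [IsProbabilityMeasure μ]
    (n : ℕ) (r : Fin (n + 1) → Ω → ℝ)
    (hmeas : ∀ i, Measurable (r i))
    (hexch : ∀ e : Equiv.Perm (Fin (n + 1)),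
      Measure.map (fun ω => fun i => r (e i) ω) μ = Measure.map (fun ω => fun i => r i ω) μ)
    (hdistinct : ∀ i j, i ≠ j → μ {ω | r i ω = r j ω} = 0)
    (α : ℝ) (hα0 : 0 < α) (hα1 : α < 1)
    (hk : ⌈(1 - α) * (n + 1)⌉₊ ≤ n)
    -- the event that the filtered output `Y^{q̂}_{n+1}` is coherently factual
    (Ev : Set Ω) (hEvMeas : MeasurableSet Ev)
    -- deterministic equivalence (proved separately): the filtered output is coherently
    -- factual iff the test score is at least `1 − q̂`
    (hEv : ∀ ω, ω ∈ Ev ↔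
      1 - kthSmallest (List.ofFn fun i : Fin n => 1 - r i.castSucc ω)
          ⌈(1 - α) * (n + 1)⌉₊ ≤ r (Fin.last n) ω) :
    1 - α ≤ (μ Ev).toReal ∧ (μ Ev).toReal ≤ 1 - α + 1 / (n + 1) := by
  classical
  set k := ⌈(1 - α) * (n + 1)⌉₊ with hkdef
  have hpos : (0:ℝ) < (1 - α) * (n + 1) := by
    have : (0:ℝ) < (n:ℝ) + 1 := by positivity
    nlinarith
  have hk1 : 1 ≤ k := Nat.one_le_ceil_iff.mpr hpos
  -- rank function and rank events
  set R : Fin (n+1) → Ω → ℕ :=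
    fun i ω => (Finset.univ.filter (fun j => r i ω ≤ r j ω)).card with hRdef
  set E : Fin (n+1) → Set Ω := fun i => {ω | R i ω ≤ k} with hEdef
  have hEmeas : ∀ i, MeasurableSet (E i) := by
    intro i
    have hR : Measurable (R i) := by
      simp_rw [hRdef, Finset.card_filter]
      exact Finset.measurable_sum _ fun j _ =>
        Measurable.ite (measurableSet_le (hmeas i) (hmeas j)) measurable_const measurable_const
    exact hR (by trivial : MeasurableSet (Set.Iic k))
  -- corresponding events in the product space
  set S : Fin (n+1) → Set (Fin (n+1) → ℝ) :=
    fun i => {f | (Finset.univ.filter (fun j => f i ≤ f j)).card ≤ k} with hSdef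
  have hSmeas : ∀ i, MeasurableSet (S i) := by
    intro i
    have hF : Measurable (fun f : Fin (n+1) → ℝ =>
        (Finset.univ.filter (fun j => f i ≤ f j)).card) := by
      simp_rw [Finset.card_filter]
      exact Finset.measurable_sum _ fun j _ =>
        Measurable.ite (measurableSet_le (measurable_pi_apply i) (measurable_pi_apply j))
          measurable_const measurable_const
    exact hF (by trivial : MeasurableSet (Set.Iic k))
  have hXmeas : Measurable (fun ω => fun j => r j ω) := measurable_pi_lambda _ hmeas
  -- Step A: all rank events have the same probability (exchangeability)
  have hA : ∀ i, μ (E i) = μ (E (Fin.last n)) := by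
    intro i
    set e := Equiv.swap i (Fin.last n) with hedef
    have hXe : Measurable (fun ω => fun j => r (e j) ω) :=
      measurable_pi_lambda _ fun j => hmeas (e j)
    have hpre1 : (fun ω => fun j => r (e j) ω) ⁻¹' (S (Fin.last n)) = E i := by
      ext ω
      simp only [Set.mem_preimage, hSdef, hEdef, Set.mem_setOf_eq, hRdef]
      have he : e (Fin.last n) = i := Equiv.swap_apply_right i (Fin.last n)
      have hcard : (Finset.univ.filter (fun j => r (e (Fin.last n)) ω ≤ r (e j) ω)).card
          = (Finset.univ.filter (fun j => r i ω ≤ r j ω)).card := by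
        simp only [he]
        rw [Finset.card_filter, Finset.card_filter]
        exact Fintype.sum_equiv e _ _ (fun j => rfl)
      rw [hcard]
    have hpre2 : (fun ω => fun j => r j ω) ⁻¹' (S (Fin.last n)) = E (Fin.last n) := rfl
    calc μ (E i) = μ ((fun ω => fun j => r (e j) ω) ⁻¹' (S (Fin.last n))) := by rw [hpre1]
      _ = (Measure.map (fun ω => fun j => r (e j) ω) μ) (S (Fin.last n)) :=
          (Measure.map_apply hXe (hSmeas _)).symm
      _ = (Measure.map (fun ω => fun j => r j ω) μ) (S (Fin.last n)) := by rw [hexch e]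
      _ = μ ((fun ω => fun j => r j ω) ⁻¹' (S (Fin.last n))) :=
          Measure.map_apply hXmeas (hSmeas _)
      _ = μ (E (Fin.last n)) := by rw [hpre2]
  -- a.s. the scores are injective
  have hae : ∀ᵐ ω ∂μ, Function.Injective (fun j => r j ω) := by
    rw [ae_iff]
    have hbad : μ (⋃ i, ⋃ j, ⋃ (_ : i ≠ j), {ω | r i ω = r j ω}) = 0 :=
      measure_iUnion_null fun i => measure_iUnion_null fun j =>
        measure_iUnion_null fun hij => hdistinct i j hij
    refine measure_mono_null ?_ hbad
    intro ω hω
    simp only [Set.mem_setOf_eq, Function.Injective] at hω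
    push_neg at hω
    obtain ⟨i, j, hij, hne⟩ := hω
    exact Set.mem_iUnion.mpr ⟨i, Set.mem_iUnion.mpr ⟨j, Set.mem_iUnion.mpr ⟨hne, hij⟩⟩⟩
  -- Step B: for injective scores, exactly k indices have rank ≤ k
  have hcount : ∀ ω, Function.Injective (fun j => r j ω) →
      ∑ i, (E i).indicator (1 : Ω → ENNReal) ω = (k : ENNReal) := by
    intro ω hω
    have hrc := rank_card_aux (fun j => r j ω) hω k (le_trans hk (Nat.le_succ n))
    calc ∑ i, (E i).indicator (1 : Ω → ENNReal) ω
        = ∑ i, if ω ∈ E i then (1:ENNReal) else 0 := by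
          simp [Set.indicator_apply]
      _ = ((Finset.univ.filter (fun i => ω ∈ E i)).card : ENNReal) := by
          rw [Finset.card_filter]
          push_cast
          simp
      _ = (k : ENNReal) := by
          have : (Finset.univ.filter (fun i => ω ∈ E i)) =
              (Finset.univ.filter (fun i : Fin (n+1) =>
                (Finset.univ.filter
                  (fun j => (fun j => r j ω) i ≤ (fun j => r j ω) j)).card ≤ k)) := rfl
          rw [this, hrc]
  -- Step C: the rank event has probability k/(n+1)
  have hsum : ∑ i : Fin (n+1), μ (E i) = (k : ENNReal) := by
    calc ∑ i : Fin (n+1), μ (E i)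
        = ∑ i : Fin (n+1), ∫⁻ ω, (E i).indicator 1 ω ∂μ := by
          refine Finset.sum_congr rfl fun i _ => ?_
          exact (lintegral_indicator_one (hEmeas i)).symm
      _ = ∫⁻ ω, ∑ i, (E i).indicator 1 ω ∂μ :=
          (lintegral_finset_sum _ fun i _ => (measurable_one.indicator (hEmeas i))).symm
      _ = ∫⁻ _, (k : ENNReal) ∂μ := by
          refine lintegral_congr_ae ?_
          filter_upwards [hae] with ω hω using hcount ω hω
      _ = (k : ENNReal) := by simp
  have hElast : μ (E (Fin.last n)) = (k : ENNReal) / ((n : ENNReal) + 1) := by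
    rw [ENNReal.eq_div_iff
      (by simp : ((n : ENNReal) + 1) ≠ 0)
      (ENNReal.add_ne_top.mpr ⟨ENNReal.natCast_ne_top n, ENNReal.one_ne_top⟩)]
    calc ((n : ENNReal) + 1) * μ (E (Fin.last n))
        = ∑ _i : Fin (n+1), μ (E (Fin.last n)) := by
          rw [Finset.sum_const, Finset.card_univ, Fintype.card_fin, nsmul_eq_mul]
          push_cast
          ring_nf
      _ = ∑ i : Fin (n+1), μ (E i) := by
          exact Finset.sum_congr rfl fun i _ => (hA i).symm
      _ = (k : ENNReal) := hsum
  -- Step D: Ev coincides a.e. with the rank event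
  have hEvEq : μ Ev = μ (E (Fin.last n)) := by
    apply measure_congr
    rw [Filter.eventuallyEq_set]
    filter_upwards [hae] with ω hω
    set x := 1 - r (Fin.last n) ω with hxdef
    set l := List.ofFn (fun i : Fin n => 1 - r i.castSucc ω) with hldef
    have hllen : l.length = n := by simp [hldef]
    have hiff1 : ω ∈ Ev ↔ x ≤ kthSmallest l k := by
      rw [hEv ω]
      constructor <;> intro h <;> · rw [hxdef] at *; linarith
    have hiff2 : x ≤ kthSmallest l k ↔ (l.filter (fun y => y < x)).length < k :=
      kth_le_iff_aux l k hk1 (by rw [hllen]; exact hk) x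
    have hcnt : (l.filter (fun y => y < x)).length + 1 = R (Fin.last n) ω := by
      have hRval : R (Fin.last n) ω
          = ∑ j : Fin (n+1), if r (Fin.last n) ω ≤ r j ω then 1 else 0 :=
        Finset.card_filter _ _
      rw [hldef, filter_ofFn_len_aux, hRval, Fin.sum_univ_castSucc]
      have hterm : ∀ i : Fin n,
          (if decide ((1 : ℝ) - r i.castSucc ω < x) = true then 1 else 0)
            = if r (Fin.last n) ω ≤ r i.castSucc ω then 1 else 0 := by
        intro i
        have hne : r (Fin.last n) ω ≠ r i.castSucc ω := by
          intro h
          have := hω h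
          exact absurd this.symm (Fin.castSucc_lt_last i).ne
        have : ((1 : ℝ) - r i.castSucc ω < x) ↔ r (Fin.last n) ω ≤ r i.castSucc ω := by
          rw [hxdef]
          constructor
          · intro h; linarith
          · intro h
            rcases lt_or_eq_of_le h with h' | h'
            · linarith
            · exact absurd h' hne
        simp [this]
      rw [Finset.sum_congr rfl (fun i _ => hterm i)]
      simp
    have hiff3 : ω ∈ E (Fin.last n) ↔ R (Fin.last n) ω ≤ k := Iff.rfl
    rw [hiff1, hiff2, hiff3, ← hcnt]
    omega
  -- Step E: arithmetic
  have htoReal : (μ Ev).toReal = (k : ℝ) / ((n : ℝ) + 1) := by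
    rw [hEvEq, hElast,
      show ((n : ENNReal) + 1) = ((n + 1 : ℕ) : ENNReal) by push_cast; ring,
      ENNReal.toReal_div, ENNReal.toReal_natCast, ENNReal.toReal_natCast]
    push_cast
    ring
  have hn1 : (0:ℝ) < (n:ℝ) + 1 := by positivity
  have hle : (1 - α) * ((n:ℝ) + 1) ≤ (k:ℝ) := by
    have := Nat.le_ceil ((1 - α) * ((n:ℝ) + 1))
    rw [hkdef]; push_cast at this ⊢; linarith
  have hlt : (k:ℝ) < (1 - α) * ((n:ℝ) + 1) + 1 := by
    have := Nat.ceil_lt_add_one (le_of_lt hpos)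
    rw [hkdef]; push_cast at this ⊢; linarith
  rw [htoReal]
  constructor
  · rw [le_div_iff₀ hn1]; linarith
  · rw [div_le_iff₀ hn1]
    have : (1 - α + 1 / ((n:ℝ) + 1)) * ((n:ℝ) + 1) = (1 - α) * ((n:ℝ) + 1) + 1 := by
      field_simp
    rw [this]; linarith
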